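/- Let μ be a locally determined positive measure, F : Ω → X locally Pettis integrable, and g, h : Ω → ℝ measurable with g = h ν_F-almost everywhere. Then gF = hF weakly μ-almost everywhere, i.e., ⟨gF, x*⟩ = ⟨hF, x*⟩ μ-a.e. for every x* ∈ X*. Moreover, if g_n → g ν_F-a.e., then ⟨g_n F, x*⟩ → ⟨gF, x*⟩ μ-a.e. for every x* ∈ X*. -/

import Mathlib

open MeasureTheory ENNReal
open scoped ENNReal

noncomputable section

variable {Ω : Type*} [MeasurableSpace Ω]
variable {X : Type*} [NormedAddCommGroup X] [NormedSpace ℝ X] [CompleteSpace X]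

/-- `F` is weakly `μ`-measurable. -/
def WeaklyMeasurable (μ : Measure Ω) (F : Ω → X) : Prop :=
  ∀ x' : StrongDual ℝ X, AEStronglyMeasurable (fun t => x' (F t)) μ

/-- `F` is Dunford integrable. -/
def DunfordIntegrable (μ : Measure Ω) (F : Ω → X) : Prop :=
  WeaklyMeasurable μ F ∧ ∀ x' : StrongDual ℝ X, Integrable (fun t => x' (F t)) μ

/-- The Dunford norm `sup_{‖x*‖ ≤ 1} ∫ |⟨F, x*⟩| dμ` (in `ℝ≥0∞`). -/
def dunfordNorm (μ : Measure Ω) (F : Ω → X) : ℝ≥0∞ :=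
  ⨆ (x' : StrongDual ℝ X) (_ : ‖x'‖ ≤ 1), ∫⁻ t, ENNReal.ofReal |x' (F t)| ∂μ

/-- `x` is the Pettis integral of `F` over `A`. -/
def IsPettisIntegralOn (μ : Measure Ω) (F : Ω → X) (A : Set Ω) (x : X) : Prop :=
  ∀ x' : StrongDual ℝ X, x' x = ∫ t in A, x' (F t) ∂μ

/-- `F` is Pettis integrable. -/
def PettisIntegrable (μ : Measure Ω) (F : Ω → X) : Prop :=
  DunfordIntegrable μ F ∧ ∀ A : Set Ω, MeasurableSet A → ∃ x : X, IsPettisIntegralOn μ F A x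

-- The Pettis integral of `F` over `A` (junk value `0` if it does not exist).
open Classical in
def pettisIntegral (μ : Measure Ω) (F : Ω → X) (A : Set Ω) : X :=
  if h : ∃ x : X, IsPettisIntegralOn μ F A x then h.choose else 0

/-- The δ-ring `Σ^f` of measurable sets of finite measure. -/
def finiteMeasureSets (μ : Measure Ω) : Set (Set Ω) :=
  {B | MeasurableSet B ∧ μ B < ∞}

/-- `F` is locally Pettis integrable. -/
def LocPettisIntegrable (μ : Measure Ω) (F : Ω → X) : Prop :=
  WeaklyMeasurable μ F ∧ ∀ B ∈ finiteMeasureSets μ, PettisIntegrable μ (B.indicator F)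

/-- `F` is locally Bochner integrable. -/
def LocBochnerIntegrable (μ : Measure Ω) (F : Ω → X) : Prop :=
  AEStronglyMeasurable F μ ∧ ∀ B ∈ finiteMeasureSets μ, Integrable (B.indicator F) μ

/-- The variation of a scalar set function `lam` defined on a δ-ring `R`,
evaluated at `A`: the supremum of `Σ_j |lam A_j|` over finite disjoint families
of members of `R` contained in `A`. -/
def scalarVariation (R : Set (Set Ω)) (lam : Set Ω → ℝ) (A : Set Ω) : ℝ≥0∞ :=
  ⨆ (P : Finset (Set Ω)) (_ : ∀ B ∈ P, B ∈ R ∧ B ⊆ A)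
    (_ : (P : Set (Set Ω)).PairwiseDisjoint id), ∑ B ∈ P, ENNReal.ofReal |lam B|

/-- The variation of a vector set function `ν` defined on a δ-ring `R`. -/
def vectorVariation (R : Set (Set Ω)) (ν : Set Ω → X) (A : Set Ω) : ℝ≥0∞ :=
  ⨆ (P : Finset (Set Ω)) (_ : ∀ B ∈ P, B ∈ R ∧ B ⊆ A)
    (_ : (P : Set (Set Ω)).PairwiseDisjoint id), ∑ B ∈ P, ENNReal.ofReal ‖ν B‖

/-- The semivariation of a vector set function `ν` defined on a δ-ring `R`. -/
def semivariation (R : Set (Set Ω)) (ν : Set Ω → X) (A : Set Ω) : ℝ≥0∞ :=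
  ⨆ (x' : StrongDual ℝ X) (_ : ‖x'‖ ≤ 1),
    scalarVariation R (fun B => x' (ν B)) A

/-- `μ` is semi-finite. -/
def SemiFinite (μ : Measure Ω) : Prop :=
  ∀ A : Set Ω, MeasurableSet A → 0 < μ A →
    ∃ B ⊆ A, MeasurableSet B ∧ 0 < μ B ∧ μ B < ∞

/-- `μ` is locally determined: it is semi-finite and a set is measurable as soon as
its intersection with every finite-measure set is measurable. -/
def LocallyDetermined (μ : Measure Ω) : Prop :=
  SemiFinite μ ∧ ∀ A : Set Ω,
    (∀ B ∈ finiteMeasureSets μ, MeasurableSet (A ∩ B)) → MeasurableSet A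


/-- On a finite-measure subset of a null set `N`, all set integrals of `⟨F, x*⟩` vanish. -/
lemma aux_setIntegral_zero (μ : Measure Ω) (F : Ω → X) (hF : LocPettisIntegrable μ F)
    (N : Set Ω)
    (hN0 : semivariation (finiteMeasureSets μ) (pettisIntegral μ F) N = 0)
    (B : Set Ω) (hB : MeasurableSet B) (hBfin : μ B < ∞) (hBN : B ⊆ N)
    (x' : StrongDual ℝ X) : ∫ t in B, x' (F t) ∂μ = 0 := by
  -- existence of the Pettis integral of F over B
  have hBmem : B ∈ finiteMeasureSets μ := ⟨hB, hBfin⟩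
  obtain ⟨x, hx⟩ := (hF.2 B hBmem).2 B hB
  have hex : ∃ y : X, IsPettisIntegralOn μ F B y := by
    refine ⟨x, fun y' => ?_⟩
    rw [hx y']
    refine setIntegral_congr_fun hB (fun t ht => ?_)
    simp [Set.indicator_of_mem ht]
  have hval : ∀ y' : StrongDual ℝ X,
      y' (pettisIntegral μ F B) = ∫ t in B, y' (F t) ∂μ := by
    intro y'
    rw [pettisIntegral, dif_pos hex]
    exact hex.choose_spec y'
  -- for functionals of norm ≤ 1, the value vanishes
  have hsmall : ∀ y' : StrongDual ℝ X, ‖y'‖ ≤ 1 →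
      y' (pettisIntegral μ F B) = 0 := by
    intro y' hy'
    have h1 : scalarVariation (finiteMeasureSets μ)
        (fun C => y' (pettisIntegral μ F C)) N = 0 := by
      refine le_antisymm ?_ (zero_le)
      rw [← hN0]
      exact le_iSup₂_of_le y' hy' le_rfl
    have h2 : ENNReal.ofReal |y' (pettisIntegral μ F B)| ≤
        scalarVariation (finiteMeasureSets μ)
          (fun C => y' (pettisIntegral μ F C)) N := by
      have hsum : ENNReal.ofReal |y' (pettisIntegral μ F B)| =
          ∑ C ∈ ({B} : Finset (Set Ω)), ENNReal.ofReal |y' (pettisIntegral μ F C)| := by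
        simp
      rw [hsum]
      refine le_iSup₂_of_le ({B} : Finset (Set Ω)) ?_ ?_
      · intro C hC
        simp only [Finset.mem_singleton] at hC
        subst hC
        exact ⟨hBmem, hBN⟩
      · refine le_iSup_of_le ?_ le_rfl
        simp
    rw [h1] at h2
    have h3 : ENNReal.ofReal |y' (pettisIntegral μ F B)| = 0 := le_antisymm h2 (zero_le)
    have h4 : |y' (pettisIntegral μ F B)| ≤ 0 := ENNReal.ofReal_eq_zero.mp h3
    exact abs_eq_zero.mp (le_antisymm h4 (abs_nonneg _))
  -- general x' by scaling
  rw [← hval x']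
  by_cases hx0 : x' = 0
  · simp [hx0]
  · set c : ℝ := ‖x'‖ with hc
    have hcpos : 0 < c := norm_pos_iff.mpr hx0
    have h1 : ‖c⁻¹ • x'‖ ≤ 1 := by
      rw [norm_smul, norm_inv, norm_norm, inv_mul_cancel₀ (ne_of_gt hcpos)]
    have h2 := hsmall (c⁻¹ • x') h1
    have h3 : (c⁻¹ • x') (pettisIntegral μ F B) = c⁻¹ * x' (pettisIntegral μ F B) := rfl
    rw [h3] at h2
    have := mul_eq_zero.mp h2
    rcases this with h | h
    · exact absurd h (inv_ne_zero (ne_of_gt hcpos))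
    · exact h

/-- If all set integrals of a function vanish on finite-measure subsets of `N`, and the
measure is semi-finite, then `N ∩ {f' > 0}` is null for a measurable version `f'`. -/
lemma aux_pos_null (μ : Measure Ω) (hμ : SemiFinite μ)
    (N : Set Ω) (hN : MeasurableSet N)
    (f : Ω → ℝ) (f' : Ω → ℝ) (hf' : Measurable f') (hff' : f =ᵐ[μ] f')
    (hint : ∀ B : Set Ω, MeasurableSet B → μ B < ∞ → B ⊆ N →
      Integrable f (μ.restrict B) ∧ ∫ t in B, f t ∂μ = 0) :
    μ (N ∩ {t | 0 < f' t}) = 0 := by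
  by_contra hcon
  have hApos : 0 < μ (N ∩ {t | 0 < f' t}) := pos_iff_ne_zero.mpr hcon
  have hAmeas : MeasurableSet (N ∩ {t | 0 < f' t}) :=
    hN.inter (measurableSet_lt measurable_const hf')
  obtain ⟨B, hBsub, hBmeas, hBpos, hBfin⟩ := hμ _ hAmeas hApos
  have hBN : B ⊆ N := hBsub.trans Set.inter_subset_left
  obtain ⟨hInt, hZero⟩ := hint B hBmeas hBfin hBN
  have hff'B : f =ᵐ[μ.restrict B] f' := ae_restrict_of_ae hff'
  have hInt' : Integrable f' (μ.restrict B) := hInt.congr hff'B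
  have hZero' : ∫ t in B, f' t ∂μ = 0 := by
    rw [← integral_congr_ae hff'B]; exact hZero
  have hnonneg : 0 ≤ᵐ[μ.restrict B] f' := by
    refine (ae_restrict_iff' hBmeas).mpr (ae_of_all _ (fun t ht => ?_))
    exact le_of_lt (hBsub ht).2
  have hzero_ae : f' =ᵐ[μ.restrict B] 0 :=
    (integral_eq_zero_iff_of_nonneg_ae hnonneg hInt').mp hZero'
  have : ∀ᵐ t ∂μ, t ∈ B → f' t = 0 := (ae_restrict_iff' hBmeas).mp hzero_ae
  have hBnull : μ B = 0 := by
    have hsub : B ⊆ {t | ¬ (t ∈ B → f' t = 0)} := by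
      intro t ht
      simp only [Set.mem_setOf_eq]
      intro hcontra
      exact absurd (hcontra ht) (ne_of_gt (hBsub ht).2)
    exact measure_mono_null hsub this
  exact absurd hBnull (ne_of_gt hBpos)

/-- Key lemma: if the semivariation of `ν_F` on `N` vanishes, then `⟨F, x*⟩ = 0`
`μ`-a.e. on `N`, for every `x*`. -/
lemma aux_key (μ : Measure Ω) (hμ : LocallyDetermined μ)
    (F : Ω → X) (hF : LocPettisIntegrable μ F)
    (N : Set Ω) (hN : MeasurableSet N)
    (hN0 : semivariation (finiteMeasureSets μ) (pettisIntegral μ F) N = 0)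
    (x' : StrongDual ℝ X) : ∀ᵐ t ∂μ, t ∈ N → x' (F t) = 0 := by
  set f : Ω → ℝ := fun t => x' (F t) with hfdef
  have hfm : AEStronglyMeasurable f μ := hF.1 x'
  set f' : Ω → ℝ := hfm.mk f with hf'def
  have hf'meas : Measurable f' := hfm.measurable_mk
  have hff' : f =ᵐ[μ] f' := hfm.ae_eq_mk
  have hint : ∀ (y' : StrongDual ℝ X) (B : Set Ω),
      MeasurableSet B → μ B < ∞ → B ⊆ N →
      Integrable (fun t => y' (F t)) (μ.restrict B) ∧ ∫ t in B, y' (F t) ∂μ = 0 := by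
    intro y' B hB hBfin hBN
    constructor
    · have := ((hF.2 B ⟨hB, hBfin⟩).1).2 y'
      have heq : (fun t => y' (B.indicator F t)) =
          B.indicator (fun t => y' (F t)) := by
        funext t
        by_cases ht : t ∈ B
        · simp [Set.indicator_of_mem ht]
        · simp [Set.indicator_of_notMem ht]
      rw [heq] at this
      exact (integrable_indicator_iff hB).mp this
    · exact aux_setIntegral_zero μ F hF N hN0 B hB hBfin hBN y'
  have hpos : μ (N ∩ {t | 0 < f' t}) = 0 := by
    refine aux_pos_null μ hμ.1 N hN f f' hf'meas hff' (fun B hB hBfin hBN => ?_)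
    exact hint x' B hB hBfin hBN
  have hneg : μ (N ∩ {t | 0 < -f' t}) = 0 := by
    refine aux_pos_null μ hμ.1 N hN (fun t => -f t) (fun t => -f' t)
      hf'meas.neg (hff'.mono (fun t ht => by simp [ht])) (fun B hB hBfin hBN => ?_)
    obtain ⟨hI, hZ⟩ := hint (-x') B hB hBfin hBN
    constructor
    · refine hI.congr (ae_of_all _ (fun t => ?_))
      simp [hfdef]
    · rw [← hZ]
      refine setIntegral_congr_fun hB (fun t _ => ?_)
      simp [hfdef]
  have hnull : μ (N ∩ {t | f' t ≠ 0}) = 0 := by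
    refine measure_mono_null (fun t ht => ?_) (measure_union_null hpos hneg)
    rcases ht with ⟨htN, htf⟩
    rcases lt_or_gt_of_ne htf with h | h
    · exact Or.inr ⟨htN, by simpa using h⟩
    · exact Or.inl ⟨htN, h⟩
  have h1 : ∀ᵐ t ∂μ, t ∈ N → f' t = 0 := by
    rw [ae_iff]
    refine measure_mono_null (fun t ht => ?_) hnull
    simp only [Set.mem_setOf_eq] at ht
    push_neg at ht
    exact ⟨ht.1, ht.2⟩
  filter_upwards [h1, hff'] with t ht heq htN
  rw [hfdef] at heq
  simp only at heq
  rw [heq]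
  exact ht htN

/-- if `g = h` `ν_F`-a.e. then `gF = hF` weakly `μ`-a.e.; and
`ν_F`-a.e. convergence `g_n → g` gives `⟨g_n F, x*⟩ → ⟨gF, x*⟩` `μ`-a.e. -/
theorem stmt15 (μ : Measure Ω) (hμ : LocallyDetermined μ)
    (F : Ω → X) (hF : LocPettisIntegrable μ F)
    (g h : Ω → ℝ) (gn : ℕ → Ω → ℝ) (hg : Measurable g) (hh : Measurable h)
    (N : Set Ω) (hN : MeasurableSet N)
    (hN0 : semivariation (finiteMeasureSets μ) (pettisIntegral μ F) N = 0) :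
    ((∀ t ∉ N, g t = h t) →
      ∀ x' : StrongDual ℝ X,
        (fun t => x' (g t • F t)) =ᵐ[μ] fun t => x' (h t • F t)) ∧
    ((∀ t ∉ N, Filter.Tendsto (fun n => gn n t) Filter.atTop (nhds (g t))) →
      ∀ x' : StrongDual ℝ X, ∀ᵐ t ∂μ,
        Filter.Tendsto (fun n => x' (gn n t • F t)) Filter.atTop
          (nhds (x' (g t • F t)))) := by
  constructor
  · intro hgh x'
    filter_upwards [aux_key μ hμ F hF N hN hN0 x'] with t ht
    by_cases htN : t ∈ N
    · simp [_root_.map_smul, ht htN]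
    · rw [hgh t htN]
  · intro hconv x'
    filter_upwards [aux_key μ hμ F hF N hN hN0 x'] with t ht
    by_cases htN : t ∈ N
    · simp only [_root_.map_smul, smul_eq_mul, ht htN, mul_zero]
      exact tendsto_const_nhds
    · simp only [_root_.map_smul, smul_eq_mul]
      exact (hconv t htN).mul tendsto_const_nhds

end
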